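/- Let k ≥ 2 and suppose the characteristic of F_q is not 2. Let λ ∈ F_q be nonzero. Then for all q > k¹⁶, there exist two pairs (x₁, y₁), (x₂, y₂) ∈ F_q × F_q with x₁^k + y₁^k = λ, x₂^k + y₂^k = λ, x₁^k ≠ x₂^k and y₁^k ≠ y₂^k. -/

import Mathlib

open Finset

/-- Number of `k`-torsion elements in a finite cyclic group. -/
lemma aux_card_pow_eq_one (G : Type*) [CommGroup G] [Fintype G] [DecidableEq G] [IsCyclic G]
    {k : ℕ} :
    (univ.filter fun x : G => x ^ k = 1).card = Nat.gcd k (Fintype.card G) := by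
  set n := Fintype.card G with hn
  have hn0 : 0 < n := Fintype.card_pos
  set e := Nat.gcd k n with he
  have he0 : 0 < e := Nat.gcd_pos_of_pos_right _ hn0
  have hen : e ∣ n := Nat.gcd_dvd_right _ _
  have hfilter : (univ.filter fun x : G => x ^ k = 1) = (univ.filter fun x : G => x ^ e = 1) := by
    ext x
    simp only [mem_filter, mem_univ, true_and, ← orderOf_dvd_iff_pow_eq_one]
    constructor
    · intro h; exact Nat.dvd_gcd h (orderOf_dvd_card)
    · intro h; exact h.trans (Nat.gcd_dvd_left _ _)
  rw [hfilter]
  apply le_antisymm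
  · exact IsCyclic.card_pow_eq_one_le he0
  · obtain ⟨g, hg⟩ := IsCyclic.exists_generator (α := G)
    have horder : orderOf g = n := by rw [orderOf_eq_card_of_forall_mem_zpowers hg, Nat.card_eq_fintype_card]
    set h := g ^ (n / e) with hh
    have hne : n / e ∣ n := Nat.div_dvd_of_dvd hen
    have horderh : orderOf h = e := by
      rw [hh, orderOf_pow, horder, Nat.gcd_eq_right hne, Nat.div_div_self hen hn0.ne']
    calc e = ((Finset.range e).image fun i => h ^ i).card := by
              rw [Finset.card_image_of_injOn, Finset.card_range]
              intro i hi j hj hij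
              simp only [Finset.coe_range, Set.mem_Iio] at hi hj
              exact pow_injOn_Iio_orderOf (by simpa [horderh] using hi)
                (by simpa [horderh] using hj) hij
      _ ≤ _ := by
              apply Finset.card_le_card
              intro x hx
              simp only [Finset.mem_image, Finset.mem_range] at hx
              obtain ⟨i, _, rfl⟩ := hx
              simp only [mem_filter, mem_univ, true_and]
              rw [← pow_mul, mul_comm, pow_mul, ← horderh, pow_orderOf_eq_one, one_pow]

/-- In a finite cyclic group, if `a ^ (n / gcd k n) = 1` then `a` is a `k`-th power. -/
lemma aux_pow_surj (G : Type*) [CommGroup G] [Fintype G] [IsCyclic G]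
    {k : ℕ} (a : G) (ha : a ^ (Fintype.card G / Nat.gcd k (Fintype.card G)) = 1) :
    ∃ v : G, v ^ k = a := by
  set n := Fintype.card G with hn
  have hn0 : 0 < n := Fintype.card_pos
  set e := Nat.gcd k n with he
  have he0 : 0 < e := Nat.gcd_pos_of_pos_right _ hn0
  have hen : e ∣ n := Nat.gcd_dvd_right _ _
  obtain ⟨g, hg⟩ := IsCyclic.exists_generator (α := G)
  have horder : orderOf g = n := by
    rw [orderOf_eq_card_of_forall_mem_zpowers hg, Nat.card_eq_fintype_card]
  obtain ⟨z, hz⟩ := hg a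
  simp only at hz
  -- from ha : (g^z)^(n/e) = 1 we get (n : ℤ) ∣ z * (n/e), hence (e:ℤ) ∣ z
  have h1 : ((n : ℕ) : ℤ) ∣ z * (n / e : ℕ) := by
    rw [← horder, orderOf_dvd_iff_zpow_eq_one, zpow_mul, hz, zpow_natCast]
    exact horder ▸ ha
  have h2 : (e : ℤ) ∣ z := by
    have hne : ((n / e : ℕ) : ℤ) ≠ 0 := by
      have : 0 < n / e := Nat.div_pos (Nat.le_of_dvd hn0 hen) he0
      exact_mod_cast this.ne'
    have hn' : ((n : ℕ) : ℤ) = (e : ℤ) * ((n / e : ℕ) : ℤ) := by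
      rw [← Nat.cast_mul, Nat.mul_div_cancel' hen]
    rw [hn', mul_comm (e:ℤ)] at h1
    exact (mul_dvd_mul_iff_left hne).mp (by rwa [mul_comm z] at h1)
  obtain ⟨s, hs⟩ := h2
  -- Bezout
  have hbez : (e : ℤ) = k * Nat.gcdA k n + n * Nat.gcdB k n := Nat.gcd_eq_gcd_ab k n
  refine ⟨g ^ (Nat.gcdA k n * s), ?_⟩
  have hgn : g ^ ((n : ℕ) : ℤ) = 1 := by
    rw [zpow_natCast, ← horder, pow_orderOf_eq_one]
  calc (g ^ (Nat.gcdA k n * s)) ^ k = g ^ (Nat.gcdA k n * s * k) := by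
        rw [← zpow_natCast (g ^ (Nat.gcdA k n * s)) k, ← zpow_mul]
    _ = g ^ ((e:ℤ) * s) * (g ^ ((n:ℕ):ℤ)) ^ (-(Nat.gcdB k n * s)) := by
        rw [← zpow_mul, ← zpow_add]
        congr 1
        linear_combination -s * hbez
    _ = a := by rw [hgn, one_zpow, mul_one, ← hs, hz]
open Finset

section
variable {F : Type*} [Field F] [Fintype F] [DecidableEq F]
variable [Fintype (MulChar F ℂ)] [DecidableEq (MulChar F ℂ)]

lemma aux_mulChar_equiv : Nonempty (MulChar F ℂ ≃* Fˣ) := MulChar.mulEquiv_units F ℂ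

lemma aux_card_mulChar : Fintype.card (MulChar F ℂ) = Fintype.card Fˣ :=
  Fintype.card_congr (aux_mulChar_equiv (F := F)).some.toEquiv

lemma aux_isCyclic_mulChar : IsCyclic (MulChar F ℂ) :=
  isCyclic_of_surjective _ (aux_mulChar_equiv (F := F)).some.symm.surjective

lemma aux_chi_val_one {k : ℕ} (hk : k ≠ 0) {a : F} (hv : ∃ v : F, v ^ k = a) (ha : a ≠ 0)
    {χ : MulChar F ℂ} (hχ : χ ^ k = 1) : χ a = 1 := by
  obtain ⟨v, rfl⟩ := hv
  have hv0 : v ≠ 0 := fun h => ha (by simp [h, zero_pow hk])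
  rw [map_pow, ← MulChar.pow_apply' χ hk, hχ, MulChar.one_apply hv0.isUnit]

lemma aux_chi_exists {k : ℕ} (hk : k ≠ 0) {a : F} (ha : a ≠ 0) (hv : ¬ ∃ v : F, v ^ k = a) :
    ∃ χ : MulChar F ℂ, χ ^ k = 1 ∧ χ a ≠ 1 := by
  set n := Fintype.card Fˣ with hn
  have hn0 : 0 < n := Fintype.card_pos
  set e := Nat.gcd k n with he
  have he0 : 0 < e := Nat.gcd_pos_of_pos_right _ hn0
  have hen : e ∣ n := Nat.gcd_dvd_right _ _
  have hek : e ∣ k := Nat.gcd_dvd_left _ _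
  have hne0 : 0 < n / e := Nat.div_pos (Nat.le_of_dvd hn0 hen) he0
  have hb : a ^ (n / e) ≠ 1 := by
    intro hb1
    apply hv
    have : (Units.mk0 a ha) ^ (n / e) = 1 := by
      ext
      simpa using hb1
    obtain ⟨u, hu⟩ := aux_pow_surj Fˣ (Units.mk0 a ha) this
    exact ⟨(u : F), by rw [← Units.val_pow_eq_pow_val, hu, Units.val_mk0]⟩
  obtain ⟨χ, hχ⟩ := MulChar.exists_apply_ne_one_of_hasEnoughRootsOfUnity F ℂ hb
  refine ⟨χ ^ (n / e), ?_, ?_⟩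
  · rw [← pow_mul]
    have hmul : (n / e) * k = n * (k / e) := by
      calc (n / e) * k = (n / e) * (e * (k / e)) := by rw [Nat.mul_div_cancel' hek]
        _ = ((n / e) * e) * (k / e) := by ring
        _ = n * (k / e) := by rw [Nat.div_mul_cancel hen]
    rw [hmul, pow_mul, MulChar.pow_card_eq_one, one_pow]
  · rw [MulChar.pow_apply' χ hne0.ne', ← map_pow]
    exact hχ



lemma aux_E_card {k : ℕ} (hk : k ≠ 0) :
    (univ.filter fun χ : MulChar F ℂ => χ ^ k = 1).card = Nat.gcd k (Fintype.card Fˣ) := by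
  haveI := aux_isCyclic_mulChar (F := F)
  rw [aux_card_pow_eq_one (MulChar F ℂ), aux_card_mulChar]

lemma aux_sum_E {k : ℕ} (hk : k ≠ 0) {a : F} (ha : a ≠ 0) :
    (∑ χ ∈ univ.filter fun χ : MulChar F ℂ => χ ^ k = 1, χ a)
      = if ∃ v : F, v ^ k = a then ((univ.filter fun χ : MulChar F ℂ => χ ^ k = 1).card : ℂ)
        else 0 := by
  set E := univ.filter fun χ : MulChar F ℂ => χ ^ k = 1 with hE
  split_ifs with hv
  · rw [Finset.sum_congr rfl fun χ hχ =>
      aux_chi_val_one hk hv ha (by simpa [hE] using hχ)]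
    simp
  · obtain ⟨χ₀, hχ₀k, hχ₀a⟩ := aux_chi_exists hk ha hv
    have key : χ₀ a * (∑ χ ∈ E, χ a) = ∑ χ ∈ E, χ a := by
      rw [Finset.mul_sum]
      refine Finset.sum_nbij' (fun χ => χ₀ * χ) (fun χ => χ₀⁻¹ * χ) ?_ ?_ ?_ ?_ ?_
      · intro χ hχ
        simp only [hE, mem_filter, mem_univ, true_and] at hχ ⊢
        rw [mul_pow, hχ₀k, hχ, mul_one]
      · intro χ hχ
        simp only [hE, mem_filter, mem_univ, true_and] at hχ ⊢
        rw [mul_pow, inv_pow, hχ₀k, hχ, inv_one, mul_one]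
      · intro χ _; exact inv_mul_cancel_left _ _
      · intro χ _; exact mul_inv_cancel_left _ _
      · intro χ _; rw [MulChar.mul_apply]
    have : (χ₀ a - 1) * (∑ χ ∈ E, χ a) = 0 := by ring_nf; linear_combination key
    rcases mul_eq_zero.mp this with h | h
    · exact absurd (by linear_combination h) hχ₀a
    · exact h

lemma aux_m_card {k : ℕ} (hk : k ≠ 0) {a : F} (ha : a ≠ 0) (hv : ∃ v : F, v ^ k = a) :
    (univ.filter fun x : F => x ^ k = a).card = Nat.gcd k (Fintype.card Fˣ) := by
  obtain ⟨v, rfl⟩ := hv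
  have hv0 : v ≠ 0 := fun h => ha (by simp [h, zero_pow hk])
  have step1 : (univ.filter fun x : F => x ^ k = v ^ k).card
      = (univ.filter fun x : F => x ^ k = 1).card := by
    refine Finset.card_nbij' (fun x => x * v⁻¹) (fun y => y * v) ?_ ?_ ?_ ?_
    · intro x hx
      simp only [mem_coe, mem_filter, mem_univ, true_and] at hx ⊢
      rw [mul_pow, hx, inv_pow, mul_inv_cancel₀ (pow_ne_zero _ hv0)]
    · intro y hy
      simp only [mem_coe, mem_filter, mem_univ, true_and] at hy ⊢
      rw [mul_pow, hy, one_mul]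
    · intro x _; field_simp
    · intro y _; field_simp
  have step2 : (univ.filter fun x : F => x ^ k = 1).card
      = (univ.filter fun u : Fˣ => u ^ k = 1).card := by
    refine Finset.card_bij (fun x hx => Units.mk0 x fun h =>
      absurd (Finset.mem_filter.mp hx).2 (by rw [h, zero_pow hk]; exact zero_ne_one)) ?_ ?_ ?_
    · intro x hx
      simp only [mem_filter, mem_univ, true_and] at hx ⊢
      exact Units.ext (by simpa using hx)
    · intro x hx y hy h
      simpa using congrArg Units.val h
    · intro u hu
      simp only [mem_filter, mem_univ, true_and] at hu
      refine ⟨(u : F), ?_, ?_⟩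
      · simp only [mem_filter, mem_univ, true_and]
        rw [← Units.val_pow_eq_pow_val, hu, Units.val_one]
      · exact Units.ext rfl
  rw [step1, step2, aux_card_pow_eq_one Fˣ]

lemma aux_m_formula {k : ℕ} (hk : k ≠ 0) {a : F} (ha : a ≠ 0) :
    ((univ.filter fun x : F => x ^ k = a).card : ℂ)
      = ∑ χ ∈ univ.filter fun χ : MulChar F ℂ => χ ^ k = 1, χ a := by
  rw [aux_sum_E hk ha]
  split_ifs with hv
  · rw [aux_m_card hk ha hv, aux_E_card hk]
  · norm_cast
    rw [Finset.card_eq_zero, Finset.filter_eq_empty_iff]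
    intro x _
    exact fun h => hv ⟨x, h⟩


lemma aux_norm_chi (χ : MulChar F ℂ) {a : F} (ha : a ≠ 0) : ‖χ a‖ = 1 := by
  have hm : Fintype.card F - 1 ≠ 0 := by
    have := Fintype.one_lt_card (α := F)
    omega
  have h : χ a ^ (Fintype.card F - 1) = 1 := by
    rw [← map_pow, FiniteField.pow_card_sub_one_eq_one a ha, map_one]
  have habs : ‖χ a‖ ^ (Fintype.card F - 1) = 1 := by
    rw [← norm_pow, h, norm_one]
  rcases (pow_eq_one_iff_cases).mp habs with h1 | h1 | h1
  · omega
  · exact h1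
  · exfalso
    nlinarith [norm_nonneg (χ a), h1.1]

lemma aux_conj_jacobi (χ φ : MulChar F ℂ) :
    jacobiSum χ⁻¹ φ⁻¹ = (starRingEnd ℂ) (jacobiSum χ φ) := by
  rw [jacobiSum, jacobiSum, map_sum]
  refine Finset.sum_congr rfl fun x _ => ?_
  rw [map_mul, ← MulChar.star_apply' χ x, ← MulChar.star_apply' φ (1 - x)]
  rfl

lemma aux_norm_jacobi {χ φ : MulChar F ℂ} (hχ : χ ≠ 1) (hφ : φ ≠ 1) (hχφ : χ * φ ≠ 1) :
    ‖jacobiSum χ φ‖ = Real.sqrt (Fintype.card F) := by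
  have hchar : ringChar ℂ ≠ ringChar F := by
    rw [ringChar.eq_zero]
    exact (CharP.char_ne_zero_of_finite F (ringChar F)).symm
  have h := jacobiSum_mul_jacobiSum_inv hchar hχ hφ hχφ
  rw [aux_conj_jacobi, Complex.mul_conj] at h
  have : Complex.normSq (jacobiSum χ φ) = (Fintype.card F : ℝ) := by
    exact_mod_cast h
  rw [Complex.norm_def, this]

lemma aux_jacobi_scale (χ φ : MulChar F ℂ) {lam : F} (hlam : lam ≠ 0) :
    ∑ a : F, χ a * φ (lam - a) = χ lam * φ lam * jacobiSum χ φ := by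
  rw [jacobiSum, Finset.mul_sum]
  refine (Fintype.sum_equiv (Equiv.mulLeft₀ lam hlam) _ _ fun x => ?_).symm
  simp only [Equiv.mulLeft₀_apply]
  have h1 : lam - lam * x = lam * (1 - x) := by ring
  rw [h1, map_mul, map_mul]
  ring


lemma aux_m_le {k : ℕ} (hk : k ≠ 0) (a : F) :
    (univ.filter fun x : F => x ^ k = a).card ≤ k := by
  have hsub : (univ.filter fun x : F => x ^ k = a) ⊆ (Polynomial.nthRoots k a).toFinset := by
    intro x hx
    rw [Multiset.mem_toFinset, Polynomial.mem_nthRoots (Nat.pos_of_ne_zero hk)]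
    exact (mem_filter.mp hx).2
  refine (Finset.card_le_card hsub).trans ?_
  refine (Multiset.toFinset_card_le _).trans ?_
  exact_mod_cast Polynomial.card_nthRoots k a

lemma aux_count_lower {k : ℕ} (hk : k ≠ 0) {lam : F} (hlam : lam ≠ 0) :
    (Fintype.card F : ℝ)
      - ((univ.filter fun χ : MulChar F ℂ => χ ^ k = 1).card : ℝ) ^ 2
          * Real.sqrt (Fintype.card F)
      - ((univ.filter fun χ : MulChar F ℂ => χ ^ k = 1).card : ℝ)
    ≤ ((univ.filter fun p : F × F => p.1 ^ k + p.2 ^ k = lam).card : ℝ) := by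
  set q := Fintype.card F with hq
  set E := univ.filter fun χ : MulChar F ℂ => χ ^ k = 1 with hEdef
  set E' := E.erase 1 with hE'def
  have hE1 : (1 : MulChar F ℂ) ∈ E := by simp [hEdef, one_pow]
  have hEinsert : E = insert 1 E' := (Finset.insert_erase hE1).symm
  have h1notE' : (1 : MulChar F ℂ) ∉ E' := Finset.notMem_erase _ _
  set N := (univ.filter fun p : F × F => p.1 ^ k + p.2 ^ k = lam).card with hNdef
  set m : F → ℕ := fun a => (univ.filter fun x : F => x ^ k = a).card with hmdef
  set M : F → ℂ := fun a => ∑ χ ∈ E, χ a with hMdef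
  -- step 1 : N = ∑ a, m a * m (lam - a)
  have step1 : N = ∑ a : F, m a * m (lam - a) := by
    rw [hNdef, Finset.card_eq_sum_card_fiberwise
      (f := fun p : F × F => p.1 ^ k) (t := univ) (fun p _ => mem_univ _)]
    refine Finset.sum_congr rfl fun a _ => ?_
    have hset : ((univ.filter fun p : F × F => p.1 ^ k + p.2 ^ k = lam).filter
        fun p => p.1 ^ k = a)
        = (univ.filter fun x : F => x ^ k = a) ×ˢ (univ.filter fun y : F => y ^ k = lam - a) := by
      ext p
      simp only [mem_filter, mem_univ, true_and, Finset.mem_product]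
      constructor
      · rintro ⟨h1, h2⟩
        exact ⟨h2, by rw [← h1, h2]; ring⟩
      · rintro ⟨h1, h2⟩
        exact ⟨by rw [h1, h2]; ring, h1⟩
    rw [hset, Finset.card_product]
  -- the m-formula for all b
  have hm : ∀ b : F, (m b : ℂ) = (if b = 0 then 1 else 0) + M b := by
    intro b
    by_cases hb : b = 0
    · subst hb
      simp only [if_pos rfl]
      have h1 : m 0 = 1 := by
        rw [hmdef]
        simp only
        rw [show (univ.filter fun x : F => x ^ k = 0) = {0} from ?_]
        · exact Finset.card_singleton 0
        · ext x
          simp [pow_eq_zero_iff hk]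
      have h2 : M 0 = 0 := by
        rw [hMdef]
        refine Finset.sum_eq_zero fun χ _ => ?_
        exact χ.map_nonunit (by simp)
      rw [h1, h2]
      norm_num
    · rw [if_neg hb, zero_add, hMdef]
      exact aux_m_formula hk hb
  -- step 2: (N : ℂ) = 2 * M lam + ∑ a, M a * M (lam - a)
  have step2 : (N : ℂ) = 2 * M lam + ∑ a : F, M a * M (lam - a) := by
    have : (N : ℂ) = ∑ a : F, (m a : ℂ) * (m (lam - a) : ℂ) := by
      rw [step1]; push_cast; ring_nf
    rw [this]
    have expand : ∀ a : F, (m a : ℂ) * (m (lam - a) : ℂ)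
        = (if a = 0 then 1 else 0) * (m (lam - a) : ℂ)
          + M a * (if lam - a = 0 then 1 else 0) + M a * M (lam - a) := by
      intro a
      rw [hm a, hm (lam - a)]
      ring
    rw [Finset.sum_congr rfl fun a _ => expand a]
    rw [Finset.sum_add_distrib, Finset.sum_add_distrib]
    have S1 : ∑ a : F, (if a = 0 then 1 else 0) * (m (lam - a) : ℂ) = M lam := by
      rw [Finset.sum_eq_single 0]
      · rw [if_pos rfl, one_mul, sub_zero, hm lam, if_neg hlam, zero_add]
      · intro b _ hb; rw [if_neg hb, zero_mul]
      · intro h; exact absurd (mem_univ 0) h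
    have S2 : ∑ a : F, M a * (if lam - a = 0 then 1 else 0) = M lam := by
      rw [Finset.sum_eq_single lam]
      · rw [if_pos (sub_self lam), mul_one]
      · intro b _ hb
        rw [if_neg (sub_ne_zero.mpr (Ne.symm hb)), mul_zero]
      · intro h; exact absurd (mem_univ lam) h
    rw [S1, S2]
    ring
  -- step 3: Jacobi expansion
  have step3 : ∑ a : F, M a * M (lam - a)
      = ∑ χ ∈ E, ∑ φ ∈ E, χ lam * φ lam * jacobiSum χ φ := by
    have hpt : ∀ a : F, M a * M (lam - a) = ∑ χ ∈ E, ∑ φ ∈ E, χ a * φ (lam - a) := by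
      intro a
      simp only [hMdef]
      exact Finset.sum_mul_sum E E (fun χ => χ a) (fun φ => φ (lam - a))
    rw [Finset.sum_congr rfl fun a _ => hpt a, Finset.sum_comm]
    refine Finset.sum_congr rfl fun χ _ => ?_
    rw [Finset.sum_comm]
    refine Finset.sum_congr rfl fun φ _ => ?_
    exact aux_jacobi_scale χ φ hlam
  have h1lam : (1 : MulChar F ℂ) lam = 1 := MulChar.one_apply hlam.isUnit
  set W := ∑ χ ∈ E', χ lam with hW
  set R := ∑ χ ∈ E', ∑ φ ∈ E'.erase χ⁻¹, χ lam * φ lam * jacobiSum χ φ with hR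
  have hMlam : M lam = 1 + W := by
    rw [hMdef]
    simp only
    rw [hEinsert, Finset.sum_insert h1notE', h1lam]
  have hEk : ∀ χ ∈ E, χ ^ k = 1 := by
    intro χ hχ
    rw [hEdef] at hχ
    simpa using hχ
  have inner1 : ∑ φ ∈ insert 1 E', (1 : MulChar F ℂ) lam * φ lam * jacobiSum 1 φ
      = ((Fintype.card F : ℂ) - 2) - W := by
    rw [Finset.sum_insert h1notE']
    have hfirst : (1 : MulChar F ℂ) lam * (1 : MulChar F ℂ) lam
          * jacobiSum (1 : MulChar F ℂ) 1 = (Fintype.card F : ℂ) - 2 := by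
      rw [h1lam, jacobiSum_one_one]
      ring
    have hrest : ∀ φ ∈ E', (1 : MulChar F ℂ) lam * φ lam * jacobiSum 1 φ = -(φ lam) := by
      intro φ hφ
      rw [h1lam, jacobiSum_one_nontrivial (Finset.ne_of_mem_erase hφ)]
      ring
    rw [hfirst, Finset.sum_congr rfl hrest, Finset.sum_neg_distrib]
    ring
  have inner2 : ∀ χ ∈ E', ∑ φ ∈ insert 1 E', χ lam * φ lam * jacobiSum χ φ
      = -(χ lam) + (-(χ (-1))) + ∑ φ ∈ E'.erase χ⁻¹, χ lam * φ lam * jacobiSum χ φ := by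
    intro χ hχ
    have hχ1 : χ ≠ 1 := Finset.ne_of_mem_erase hχ
    have hχE : χ ∈ E := Finset.mem_of_mem_erase hχ
    have hinv_mem : χ⁻¹ ∈ E' := by
      rw [hE'def, Finset.mem_erase]
      refine ⟨fun h => hχ1 (by rwa [inv_eq_one] at h), ?_⟩
      rw [hEdef]
      simp only [mem_filter, mem_univ, true_and]
      rw [inv_pow, hEk χ hχE, inv_one]
    rw [Finset.sum_insert h1notE', ← Finset.add_sum_erase _ _ hinv_mem]
    have t1 : χ lam * (1 : MulChar F ℂ) lam * jacobiSum χ 1 = -(χ lam) := by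
      rw [h1lam, jacobiSum_comm, jacobiSum_one_nontrivial hχ1]
      ring
    have hχlam0 : χ lam ≠ 0 := (hlam.isUnit.map χ).ne_zero
    have t2 : χ lam * χ⁻¹ lam * jacobiSum χ χ⁻¹ = -(χ (-1)) := by
      rw [MulChar.inv_apply_eq_inv', mul_inv_cancel₀ hχlam0,
        jacobiSum_nontrivial_inv hχ1]
      ring
    rw [t1, t2]
    ring
  have keyN : (N : ℂ) = (Fintype.card F : ℂ) - (∑ χ ∈ E', χ (-1)) + R := by
    rw [step2, step3, hMlam, hEinsert, Finset.sum_insert h1notE', inner1,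
      Finset.sum_congr rfl inner2, Finset.sum_add_distrib, Finset.sum_add_distrib,
      Finset.sum_neg_distrib, Finset.sum_neg_distrib, ← hW, ← hR]
    ring
  -- norm bounds
  have hsqrt0 : (0:ℝ) ≤ Real.sqrt (Fintype.card F) := Real.sqrt_nonneg _
  have hRnorm : ‖R‖ ≤ (E'.card : ℝ) * ((E'.card : ℝ) * Real.sqrt (Fintype.card F)) := by
    refine (norm_sum_le _ _).trans ?_
    have hterm : ∀ χ ∈ E', ‖∑ φ ∈ E'.erase χ⁻¹, χ lam * φ lam * jacobiSum χ φ‖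
        ≤ (E'.card : ℝ) * Real.sqrt (Fintype.card F) := by
      intro χ hχ
      have hχ1 : χ ≠ 1 := Finset.ne_of_mem_erase hχ
      refine (norm_sum_le _ _).trans ?_
      have hterm2 : ∀ φ ∈ E'.erase χ⁻¹,
          ‖χ lam * φ lam * jacobiSum χ φ‖ = Real.sqrt (Fintype.card F) := by
        intro φ hφ
        have hφ1 : φ ≠ 1 := Finset.ne_of_mem_erase (Finset.mem_of_mem_erase hφ)
        have hχφ : χ * φ ≠ 1 := fun h => (Finset.ne_of_mem_erase hφ)
          (eq_inv_of_mul_eq_one_left (by rwa [mul_comm] at h))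
        rw [norm_mul, norm_mul, aux_norm_chi χ hlam, aux_norm_chi φ hlam,
          aux_norm_jacobi hχ1 hφ1 hχφ]
        ring
      rw [Finset.sum_congr rfl hterm2, Finset.sum_const, nsmul_eq_mul]
      have : ((E'.erase χ⁻¹).card : ℝ) ≤ (E'.card : ℝ) := by
        exact_mod_cast Finset.card_le_card (Finset.erase_subset _ _)
      nlinarith
    calc ∑ χ ∈ E', ‖∑ φ ∈ E'.erase χ⁻¹, χ lam * φ lam * jacobiSum χ φ‖
        ≤ ∑ _χ ∈ E', (E'.card : ℝ) * Real.sqrt (Fintype.card F) :=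
          Finset.sum_le_sum hterm
      _ = (E'.card : ℝ) * ((E'.card : ℝ) * Real.sqrt (Fintype.card F)) := by
          rw [Finset.sum_const, nsmul_eq_mul]
  have hSnorm : ‖∑ χ ∈ E', χ (-1)‖ ≤ (E'.card : ℝ) := by
    refine (norm_sum_le _ _).trans ?_
    have : ∀ χ ∈ E', ‖χ (-1)‖ = 1 := by
      intro χ _
      exact aux_norm_chi χ (by norm_num : (-1 : F) ≠ 0)
    rw [Finset.sum_congr rfl this, Finset.sum_const, nsmul_eq_mul, mul_one]
  -- conclude
  have hdiff : ‖(Fintype.card F : ℂ) - (N : ℂ)‖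
      ≤ (E'.card : ℝ) + (E'.card : ℝ) * ((E'.card : ℝ) * Real.sqrt (Fintype.card F)) := by
    have : (Fintype.card F : ℂ) - (N : ℂ) = (∑ χ ∈ E', χ (-1)) - R := by
      rw [keyN]; ring
    rw [this, sub_eq_add_neg]
    refine (norm_add_le _ _).trans ?_
    rw [norm_neg]
    exact add_le_add hSnorm hRnorm
  have habs : |(Fintype.card F : ℝ) - (N : ℝ)| = ‖(Fintype.card F : ℂ) - (N : ℂ)‖ := by
    rw [show (Fintype.card F : ℂ) - (N : ℂ) = (((Fintype.card F : ℝ) - (N : ℝ) : ℝ) : ℂ) by push_cast; ring,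
      Complex.norm_real, Real.norm_eq_abs]
  have hcard' : (E'.card : ℝ) ≤ (E.card : ℝ) := by
    exact_mod_cast Finset.card_le_card (Finset.erase_subset _ _)
  have hc0 : (0:ℝ) ≤ (E'.card : ℝ) := Nat.cast_nonneg _
  have h1 : (Fintype.card F : ℝ) - (N : ℝ) ≤ |(Fintype.card F : ℝ) - (N : ℝ)| := le_abs_self _
  rw [habs] at h1
  have h2 := h1.trans hdiff
  have h3 : (E'.card : ℝ) * ((E'.card : ℝ) * Real.sqrt (Fintype.card F))
      ≤ (E.card : ℝ)^2 * Real.sqrt (Fintype.card F) := by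
    have hsq : (E'.card:ℝ)^2 ≤ (E.card:ℝ)^2 := by nlinarith
    calc (E'.card : ℝ) * ((E'.card : ℝ) * Real.sqrt (Fintype.card F))
        = (E'.card:ℝ)^2 * Real.sqrt (Fintype.card F) := by ring
      _ ≤ (E.card:ℝ)^2 * Real.sqrt (Fintype.card F) :=
          mul_le_mul_of_nonneg_right hsq hsqrt0
  simp only [← hq] at h2 h3 ⊢
  linarith

end

set_option maxHeartbeats 1000000 in
/-- For odd characteristic, `λ ≠ 0` and `q > k¹⁶`, the equation `X^k + Y^k = λ` has
two solutions with distinct `k`-th powers in each coordinate. -/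
theorem stmt_8 (k : ℕ) (hk : 2 ≤ k) (F : Type*) [Field F] [Fintype F]
    (hchar : ringChar F ≠ 2) (lam : F) (hlam : lam ≠ 0)
    (hq : k ^ 16 < Fintype.card F) :
    ∃ x₁ y₁ x₂ y₂ : F,
      x₁ ^ k + y₁ ^ k = lam ∧ x₂ ^ k + y₂ ^ k = lam ∧
      x₁ ^ k ≠ x₂ ^ k ∧ y₁ ^ k ≠ y₂ ^ k := by
  classical
  letI : Fintype (MulChar F ℂ) := Fintype.ofFinite _
  have hk0 : k ≠ 0 := by omega
  set E := univ.filter fun χ : MulChar F ℂ => χ ^ k = 1 with hE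
  have hEcard : E.card ≤ k := by
    rw [hE, aux_E_card hk0]
    exact Nat.gcd_le_left _ (by omega)
  have hlow := aux_count_lower (F := F) hk0 hlam
  rw [← hE] at hlow
  by_contra hcon
  push_neg at hcon
  set S := univ.filter fun p : F × F => p.1 ^ k + p.2 ^ k = lam with hS
  have hsame : ∀ p ∈ S, ∀ p' ∈ S, p.1 ^ k = p'.1 ^ k := by
    intro p hp p' hp'
    have h1 : p.1 ^ k + p.2 ^ k = lam := (mem_filter.mp hp).2
    have h2 : p'.1 ^ k + p'.2 ^ k = lam := (mem_filter.mp hp').2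
    by_contra hne
    have h3 := hcon p.1 p.2 p'.1 p'.2 h1 h2 hne
    exact hne (by linear_combination h1 - h2 - h3)
  have hSbound : S.card ≤ k * k := by
    rcases Finset.eq_empty_or_nonempty S with hemp | ⟨p₀, hp₀⟩
    · rw [hemp]
      simp
    · have hsub : S ⊆ (univ.filter fun x : F => x ^ k = p₀.1 ^ k)
          ×ˢ (univ.filter fun y : F => y ^ k = lam - p₀.1 ^ k) := by
        intro p hp
        have ha : p.1 ^ k = p₀.1 ^ k := hsame p hp p₀ hp₀
        have hb : p.2 ^ k = lam - p₀.1 ^ k := by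
          have := (mem_filter.mp hp).2
          linear_combination this - ha
        rw [Finset.mem_product]
        exact ⟨by simp [mem_filter, ha], by simp [mem_filter, hb]⟩
      refine (Finset.card_le_card hsub).trans ?_
      rw [Finset.card_product]
      exact Nat.mul_le_mul (aux_m_le hk0 _) (aux_m_le hk0 _)
  -- numerics
  set K : ℝ := (k : ℝ) with hK
  have hK2 : (2:ℝ) ≤ K := by rw [hK]; exact_mod_cast hk
  set s : ℝ := Real.sqrt (Fintype.card F) with hs
  have hq0 : (0:ℝ) ≤ (Fintype.card F : ℝ) := by positivity
  have hs2 : s ^ 2 = (Fintype.card F : ℝ) := Real.sq_sqrt hq0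
  have hs0 : 0 ≤ s := Real.sqrt_nonneg _
  have hq16 : K ^ 16 < (Fintype.card F : ℝ) := by rw [hK]; exact_mod_cast hq
  have hK8 : K ^ 8 ≤ s := by
    rw [hs, Real.le_sqrt (by positivity) hq0]
    nlinarith
  have hEcard' : (E.card : ℝ) ≤ K := by rw [hK]; exact_mod_cast hEcard
  have hScard' : (S.card : ℝ) ≤ K * K := by rw [hK]; exact_mod_cast hSbound
  have hEc0 : (0:ℝ) ≤ (E.card : ℝ) := by positivity
  have hlow' : (Fintype.card F : ℝ) - K ^ 2 * s - K ≤ (S.card : ℝ) := by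
    refine le_trans ?_ hlow
    have h0 : (E.card : ℝ)^2 ≤ K^2 := by nlinarith
    have h1 : (E.card : ℝ)^2 * s ≤ K^2 * s := mul_le_mul_of_nonneg_right h0 hs0
    linarith
  have hs256 : (256:ℝ) ≤ s := by
    have h28 : (2:ℝ)^8 ≤ K^8 := pow_le_pow_left₀ (by norm_num) hK2 8
    have : (256:ℝ) = 2^8 := by norm_num
    linarith
  have hss : s * s ≤ K^2 * s + K + K^2 := by nlinarith [hs2]
  have h6 : (64:ℝ) ≤ K^6 := by
    have : (2:ℝ)^6 ≤ K^6 := pow_le_pow_left₀ (by norm_num) hK2 6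
    norm_num at this ⊢
    linarith
  have h64 : 64 * K^2 ≤ K^8 := by nlinarith [sq_nonneg K, h6]
  have c1 : 64 * K^2 * s ≤ K^8 * s := mul_le_mul_of_nonneg_right h64 hs0
  have c2 : K^8 * s ≤ s * s := mul_le_mul_of_nonneg_right hK8 hs0
  have hKs : 256 * K^2 ≤ K^2 * s := by
    have := mul_le_mul_of_nonneg_left hs256 (sq_nonneg K)
    linarith
  nlinarith [c1, c2, hss, hKs, sq_nonneg (K - 1), sq_nonneg K, hK2]
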